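/- Fix μ0, μ1 > 0, real numbers d0, d1 and ω̃ > 0, and for each sufficiently large k ∈ ℕ let ω_k ∈ (kπ, (k+1)π) be the unique solution in that interval of the characteristic equation (ω² − μ0·μ1·(ω² − d0)·(ω² − d1))·sin ω + (μ0·(ω² − d0) + μ1·(ω² − d1))·ω·cos ω = 0, let X_k(x) := ω_k·cos(ω_k x) + μ0·(d0 − ω_k²)·sin(ω_k x), and let N_k := μ0·X_k(0)² + μ1·X_k(1)² + ∫₀¹ X_k(x)² dx. Then the series Σ_k √(ω̃² + ω_k²)·X_k(0)²/N_k = Σ_k √(ω̃² + ω_k²)·ω_k²/N_k diverges to +∞. (This divergence means that the function supported at the boundary point 0 does not belong to the one-particle Hilbert space 𝔥 with scalar product ⟨·,·⟩₊ weighted by √(ω̃² − Δ_μ), which is the key step showing that the Fock space of the string–point-mass system does not factorize as a tensor product of Hilbert spaces associated with the masses and the string.) -/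

import Mathlib

open Real Set Filter

set_option maxHeartbeats 1000000 in
/-- The series Σ_k √(ω̃² + ω_k²)·X_k(0)²/N_k = Σ_k √(ω̃² + ω_k²)·ω_k²/N_k
diverges to +∞, so the boundary-supported function does not belong to the
one-particle Hilbert space: the Fock space does not factorize. -/
theorem boundary_function_not_in_one_particle_space
    (μ0 μ1 d0 d1 ωt : ℝ) (hμ0 : 0 < μ0) (hμ1 : 0 < μ1) (hωt : 0 < ωt)
    (G : ℝ → ℝ)
    (hG : ∀ x, G x = (x^2 - μ0*μ1*(x^2 - d0)*(x^2 - d1)) * Real.sin x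
        + (μ0*(x^2 - d0) + μ1*(x^2 - d1)) * x * Real.cos x)
    (ω : ℕ → ℝ) (K₀ : ℕ)
    (hω : ∀ k : ℕ, K₀ ≤ k →
      ω k ∈ Ioo ((k:ℝ)*π) (((k:ℝ)+1)*π) ∧ G (ω k) = 0 ∧
      ∀ ω' ∈ Ioo ((k:ℝ)*π) (((k:ℝ)+1)*π), G ω' = 0 → ω' = ω k)
    (X : ℕ → ℝ → ℝ)
    (hX : ∀ k x, X k x = ω k * Real.cos (ω k * x) + μ0*(d0 - (ω k)^2) * Real.sin (ω k * x))
    (N : ℕ → ℝ)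
    (hN : ∀ k, N k = μ0 * (X k 0)^2 + μ1 * (X k 1)^2 + ∫ x in (0:ℝ)..1, (X k x)^2) :
    Tendsto (fun n => ∑ k ∈ Finset.range n,
      Real.sqrt (ωt^2 + (ω k)^2) * (X k 0)^2 / N k) atTop atTop := by
  set f : ℕ → ℝ := fun k => Real.sqrt (ωt^2 + (ω k)^2) * (X k 0)^2 / N k with hf
  -- integral nonneg, N nonneg
  have hintnn : ∀ k, 0 ≤ ∫ x in (0:ℝ)..1, (X k x)^2 := fun k =>
    intervalIntegral.integral_nonneg (by norm_num) (fun x _ => sq_nonneg _)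
  have hNnn : ∀ k, 0 ≤ N k := by
    intro k
    rw [hN]
    have := hintnn k
    positivity
  have hfnn : ∀ k, 0 ≤ f k := fun k =>
    div_nonneg (mul_nonneg (Real.sqrt_nonneg _) (sq_nonneg _)) (hNnn k)
  set A : ℝ := 1 + μ0*(|d0|+1) with hA
  have hA1 : 1 ≤ A := by
    have : 0 ≤ |d0| := abs_nonneg _
    nlinarith
  set D : ℝ := μ0 + (μ1+1)*A^2 with hD
  have hDpos : 0 < D := by nlinarith
  set K₁ : ℕ := max K₀ 1 with hK₁
  set c : ℝ := 1/(D*π) with hc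
  have hπ : 0 < π := Real.pi_pos
  have hcpos : 0 < c := by positivity
  -- key lower bound
  have key : ∀ k, K₁ ≤ k → c/(k+1) ≤ f k := by
    intro k hk
    have hk0 : K₀ ≤ k := le_trans (le_max_left _ _) hk
    have hk1 : 1 ≤ k := le_trans (le_max_right _ _) hk
    obtain ⟨⟨hwl, hwu⟩, -, -⟩ := hω k hk0
    set w := ω k with hw
    have hk1' : (1:ℝ) ≤ (k:ℝ) := by exact_mod_cast hk1
    have hw1 : 1 < w := by nlinarith [Real.pi_gt_three]
    have hwpos : 0 < w := by linarith
    -- pointwise bound on X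
    set B : ℝ := w + μ0*(|d0| + w^2) with hB
    have hBpos : 0 < B := by positivity
    have hXb : ∀ x : ℝ, (X k x)^2 ≤ B^2 := by
      intro x
      have habs : |X k x| ≤ B := by
        rw [hX]
        calc |w * Real.cos (w*x) + μ0*(d0 - w^2) * Real.sin (w*x)|
            ≤ |w * Real.cos (w*x)| + |μ0*(d0 - w^2) * Real.sin (w*x)| := abs_add_le _ _
          _ ≤ w * 1 + μ0*(|d0| + w^2) * 1 := by
              gcongr ?_ + ?_
              · rw [abs_mul]
                gcongr
                · rw [abs_of_pos hwpos]
                · exact Real.abs_cos_le_one _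
              · rw [abs_mul, abs_mul]
                gcongr
                · rw [abs_of_pos hμ0]
                · calc |d0 - w^2| ≤ |d0| + |w^2| := abs_sub _ _
                    _ = |d0| + w^2 := by rw [abs_of_nonneg (sq_nonneg w)]
                · exact Real.abs_sin_le_one _
          _ = B := by ring
      calc (X k x)^2 = |X k x|^2 := (sq_abs _).symm
        _ ≤ B^2 := pow_le_pow_left₀ (abs_nonneg _) habs 2
    -- integral bound
    have hcont : Continuous (fun x => (X k x)^2) := by
      have hfun : (fun x => (X k x)^2)
          = fun x => (w * Real.cos (w*x) + μ0*(d0 - w^2) * Real.sin (w*x))^2 :=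
        funext fun x => by rw [hX]
      rw [hfun]
      fun_prop
    have hint : (∫ x in (0:ℝ)..1, (X k x)^2) ≤ B^2 := by
      have h1 : (∫ x in (0:ℝ)..1, (X k x)^2) ≤ ∫ _x in (0:ℝ)..1, B^2 := by
        apply intervalIntegral.integral_mono_on (by norm_num)
          (hcont.intervalIntegrable 0 1) (intervalIntegrable_const)
        intro x _
        exact hXb x
      simpa using h1
    -- bound N
    have hX0 : X k 0 = w := by rw [hX]; simp [hw]
    have hNub : N k ≤ D * w^4 := by
      rw [hN, hX0]
      have h1 : μ1 * (X k 1)^2 ≤ μ1 * B^2 := by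
        have := hXb 1; nlinarith
      have hBA : B ≤ A * w^2 := by
        rw [hB, hA]
        have h2 : w ≤ w^2 := by nlinarith
        have h3 : |d0| ≤ |d0| * w^2 := by nlinarith [abs_nonneg d0]
        nlinarith
      have hB2 : B^2 ≤ A^2 * w^4 := by nlinarith
      have hww : 1 ≤ w^2 := by nlinarith
      have hw2 : w^2 ≤ w^4 := by nlinarith [mul_nonneg (sq_nonneg w) (sub_nonneg.mpr hww)]
      nlinarith
    have hNpos : 0 < N k := by
      rw [hN, hX0]
      have := hintnn k
      nlinarith [mul_pos hμ0 (pow_pos hwpos 2), mul_nonneg hμ1.le (sq_nonneg (X k 1))]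
    -- numerator bound
    have hsq : w ≤ Real.sqrt (ωt^2 + w^2) :=
      calc w = Real.sqrt (w^2) := (Real.sqrt_sq hwpos.le).symm
        _ ≤ Real.sqrt (ωt^2 + w^2) := Real.sqrt_le_sqrt (by nlinarith)
    -- assemble
    have hstep1 : w^3 / (D * w^4) ≤ f k := by
      rw [hf]
      simp only [hX0]
      calc w^3 / (D * w^4) ≤ w^3 / N k := by
            apply div_le_div_of_nonneg_left (by positivity) hNpos hNub
        _ ≤ Real.sqrt (ωt^2 + w^2) * w^2 / N k := by
            gcongr
            nlinarith [Real.sqrt_nonneg (ωt^2 + w^2)]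
    have heq : w^3 / (D * w^4) = 1 / (D * w) := by
      field_simp
    have hfinal : c / (k+1) ≤ 1 / (D * w) := by
      rw [hc]
      rw [div_div]
      apply one_div_le_one_div_of_le (by positivity)
      calc D * w ≤ D * (((k:ℝ)+1)*π) := by nlinarith
        _ = D * π * ((k:ℝ)+1) := by ring
    calc c / (k+1) ≤ 1 / (D * w) := hfinal
      _ = w^3 / (D * w^4) := heq.symm
      _ ≤ f k := hstep1
  -- comparison with harmonic series
  have hH : Tendsto (fun n => ∑ k ∈ Finset.range n, (1:ℝ)/(k+1)) atTop atTop :=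
    Real.tendsto_sum_range_one_div_nat_succ_atTop
  have hcH : Tendsto (fun n => c * (∑ k ∈ Finset.range n, (1:ℝ)/(k+1))
      - c * (∑ k ∈ Finset.range K₁, (1:ℝ)/(k+1))) atTop atTop := by
    apply tendsto_atTop_add_const_right
    exact hH.const_mul_atTop hcpos
  apply tendsto_atTop_mono' atTop _ hcH
  filter_upwards [eventually_ge_atTop K₁] with n hn
  have h1 : c * (∑ k ∈ Finset.range n, (1:ℝ)/(k+1))
      - c * (∑ k ∈ Finset.range K₁, (1:ℝ)/(k+1))
      = ∑ k ∈ Finset.Ico K₁ n, c/(k+1) := by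
    rw [Finset.sum_Ico_eq_sub _ hn, Finset.mul_sum, Finset.mul_sum]
    simp only [mul_one_div]
  rw [h1]
  calc ∑ k ∈ Finset.Ico K₁ n, c/(k+1)
      ≤ ∑ k ∈ Finset.Ico K₁ n, f k := by
        apply Finset.sum_le_sum
        intro k hk
        exact key k (Finset.mem_Ico.mp hk).1
    _ ≤ ∑ k ∈ Finset.range n, f k := by
        apply Finset.sum_le_sum_of_subset_of_nonneg
        · intro k hk
          exact Finset.mem_range.mpr (Finset.mem_Ico.mp hk).2
        · intro k _ _
          exact hfnn k
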